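/- arXiv:2510.25192 — 6 statements merged into one kernel-verified Lean document; each statement's English description precedes it below -/
import Mathlib

section
/- The energy efficiency f_EE(P) is concave on the interval [0, P*]; in particular, its second derivative is strictly negative at every P ∈ (0, P*). -/
open Real Set


/-- Lemma 2 (concavity part): the energy efficiency
`f_EE(P) = log₂(1 + ζP) / (P + P_f + χ·log₂(1 + ζP))` is concave on `[0, P*]`,
and its second derivative is strictly negative on `(0, P*)`, where `P*` is the
unique positive root of `ζ(P + P_f) = (1 + ζP)·ln(1 + ζP)`. -/
theorem fEE_concave_on_Icc
    (ζ Pf χ : ℝ) (hζ : 0 < ζ) (hPf : 0 < Pf) (hχ : 0 ≤ χ)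
    (Pstar : ℝ) (hPstar : 0 < Pstar)
    (hroot : ζ * (Pstar + Pf) = (1 + ζ * Pstar) * Real.log (1 + ζ * Pstar)) :
    ConcaveOn ℝ (Set.Icc 0 Pstar)
        (fun P : ℝ =>
          Real.logb 2 (1 + ζ * P) / (P + Pf + χ * Real.logb 2 (1 + ζ * P))) ∧
      ∀ P ∈ Set.Ioo 0 Pstar,
        deriv
            (deriv
              (fun P : ℝ =>
                Real.logb 2 (1 + ζ * P) /
                  (P + Pf + χ * Real.logb 2 (1 + ζ * P)))) P < 0 := by
  have ha : (0:ℝ) < Real.log 2 := Real.log_pos one_lt_two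
  set a := Real.log 2 with ha_def
  -- rewrite the function
  have hfun : (fun P : ℝ =>
        Real.logb 2 (1 + ζ * P) / (P + Pf + χ * Real.logb 2 (1 + ζ * P)))
      = fun P : ℝ => Real.log (1 + ζ * P) / (a * (P + Pf) + χ * Real.log (1 + ζ * P)) := by
    funext P
    rw [Real.logb, div_div]
    congr 1
    field_simp
    ring
  rw [hfun]
  set L : ℝ → ℝ := fun P => Real.log (1 + ζ * P) with hL_def
  set Dd : ℝ → ℝ := fun P => a * (P + Pf) + χ * L P with hDd_def
  set Gf : ℝ → ℝ := fun P => ζ * (P + Pf) / (1 + ζ * P) - L P with hGf_def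
  -- basic positivity on [0, ∞)
  have h1 : ∀ P : ℝ, 0 ≤ P → (0:ℝ) < 1 + ζ * P := fun P hP => by positivity
  have hLpos : ∀ P : ℝ, 0 ≤ P → 0 ≤ L P := fun P hP =>
    Real.log_nonneg (by nlinarith)
  have hDpos : ∀ P : ℝ, 0 ≤ P → 0 < Dd P := fun P hP => by
    have := hLpos P hP
    have : 0 ≤ χ * L P := mul_nonneg hχ this
    have : 0 < a * (P + Pf) := by positivity
    simp only [hDd_def]
    nlinarith [mul_nonneg hχ (hLpos P hP)]
  -- derivative of L
  have hLder : ∀ P : ℝ, 0 ≤ P → HasDerivAt L (ζ / (1 + ζ * P)) P := by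
    intro P hP
    have hlin : HasDerivAt (fun P : ℝ => 1 + ζ * P) ζ P := by
      simpa using ((hasDerivAt_id P).const_mul ζ).const_add 1
    have := (Real.hasDerivAt_log (h1 P hP).ne').comp P hlin
    simpa [div_eq_mul_inv, mul_comm, hL_def, Function.comp_def] using this
  -- derivative of Dd
  have hDder : ∀ P : ℝ, 0 ≤ P → HasDerivAt Dd (a + χ * (ζ / (1 + ζ * P))) P := by
    intro P hP
    have h1' : HasDerivAt (fun P : ℝ => a * (P + Pf)) a P := by
      simpa using ((hasDerivAt_id P).add_const Pf).const_mul a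
    exact h1'.add ((hLder P hP).const_mul χ)
  -- derivative of Gf
  have hGder : ∀ P : ℝ, 0 ≤ P →
      HasDerivAt Gf (-(ζ^2 * (P + Pf)) / (1 + ζ * P)^2) P := by
    intro P hP
    have hnum : HasDerivAt (fun P : ℝ => ζ * (P + Pf)) ζ P := by
      simpa using ((hasDerivAt_id P).add_const Pf).const_mul ζ
    have hden : HasDerivAt (fun P : ℝ => 1 + ζ * P) ζ P := by
      simpa using ((hasDerivAt_id P).const_mul ζ).const_add 1
    have hq := hnum.div hden (h1 P hP).ne'
    have := hq.sub (hLder P hP)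
    refine this.congr_deriv ?_
    have h1ne := (h1 P hP).ne'
    field_simp
    ring
  have hDd' : ∀ P : ℝ, 0 ≤ P → 0 < a + χ * (ζ / (1 + ζ * P)) := by
    intro P hP
    have : 0 ≤ χ * (ζ / (1 + ζ * P)) :=
      mul_nonneg hχ (le_of_lt (div_pos hζ (h1 P hP)))
    linarith
  -- Gf Pstar = 0
  have hGstar : Gf Pstar = 0 := by
    have h1s := h1 Pstar hPstar.le
    simp only [hGf_def, hL_def]
    rw [hroot]
    field_simp
    ring
  -- Gf strictly anti on Icc
  have hanti : StrictAntiOn Gf (Icc 0 Pstar) := by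
    apply strictAntiOn_of_deriv_neg (convex_Icc _ _)
    · intro x hx
      exact (hGder x hx.1).continuousAt.continuousWithinAt
    · intro x hx
      rw [interior_Icc] at hx
      rw [(hGder x hx.1.le).deriv]
      apply div_neg_of_neg_of_pos
      · have : 0 < ζ^2 * (x + Pf) := mul_pos (pow_pos hζ 2) (by linarith [hx.1])
        linarith
      · exact pow_pos (h1 x hx.1.le) 2
  have hGpos : ∀ P ∈ Ioo 0 Pstar, 0 < Gf P := by
    intro P hP
    have := hanti ⟨hP.1.le, hP.2.le⟩ ⟨hPstar.le, le_refl _⟩ hP.2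
    rw [hGstar] at this
    exact this
  -- first derivative formula
  have hgder : ∀ P : ℝ, 0 ≤ P →
      HasDerivAt (fun P => L P / Dd P) (a * Gf P / Dd P ^ 2) P := by
    intro P hP
    have hD := hDpos P hP
    have hder := (hLder P hP).div (hDder P hP) hD.ne'
    refine hder.congr_deriv ?_
    have h1ne := (h1 P hP).ne'
    simp only [hGf_def, hDd_def, hL_def]
    field_simp
    ring
  -- second part
  have key : ∀ P ∈ Set.Ioo 0 Pstar,
      deriv (deriv (fun P => L P / Dd P)) P < 0 := by
    intro P hP
    have hev : deriv (fun P => L P / Dd P) =ᶠ[nhds P] fun P => a * Gf P / Dd P ^ 2 := by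
      filter_upwards [isOpen_Ioo.mem_nhds hP] with x hx
      exact (hgder x hx.1.le).deriv
    rw [hev.deriv_eq]
    -- derivative of a * Gf / Dd^2
    have hD := hDpos P hP.1.le
    have hnum : HasDerivAt (fun P => a * Gf P)
        (a * (-(ζ^2 * (P + Pf)) / (1 + ζ * P)^2)) P :=
      (hGder P hP.1.le).const_mul a
    have hden : HasDerivAt (fun P => Dd P ^ 2)
        (2 * Dd P ^ 1 * (a + χ * (ζ / (1 + ζ * P)))) P :=
      (hDder P hP.1.le).pow 2
    have h2 := hnum.div hden (pow_pos hD 2).ne'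
    rw [show (fun P => a * Gf P / Dd P ^ 2) = ((fun P => a * Gf P) / fun P => Dd P ^ 2) from rfl, h2.deriv]
    apply div_neg_of_neg_of_pos
    · have hG := hGpos P hP
      have hD' := hDd' P hP.1.le
      have ht1 : a * (-(ζ^2 * (P + Pf)) / (1 + ζ * P)^2) * Dd P ^ 2 < 0 := by
        apply mul_neg_of_neg_of_pos
        · apply mul_neg_of_pos_of_neg ha
          apply div_neg_of_neg_of_pos
          · have : 0 < ζ^2 * (P + Pf) := mul_pos (pow_pos hζ 2) (by linarith [hP.1])
            linarith
          · exact pow_pos (h1 P hP.1.le) 2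
        · exact pow_pos hD 2
      have ht2 : 0 < a * Gf P * (2 * Dd P ^ 1 * (a + χ * (ζ / (1 + ζ * P)))) := by
        apply mul_pos (mul_pos ha hG)
        apply mul_pos (by simpa using mul_pos two_pos hD) hD'
      linarith
    · exact pow_pos (pow_pos hD 2) 2
  constructor
  · have hconc : StrictConcaveOn ℝ (Icc 0 Pstar) (fun P => L P / Dd P) := by
      apply strictConcaveOn_of_deriv2_neg (convex_Icc _ _)
      · intro x hx
        exact (hgder x hx.1).continuousAt.continuousWithinAt
      · intro x hx
        rw [interior_Icc] at hx
        simpa using key x hx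
    exact hconc.concaveOn
  · exact key
end

section
/- Call a point P ∈ [0, P_T] Pareto optimal if there is no P' ∈ [0, P_T] with both f_SE(P') > f_SE(P) and f_EE(P') > f_EE(P). Then the set of Pareto optimal points equals {P_T} if P* ≥ P_T, and equals the closed interval [P*, P_T] if P* < P_T. -/
open Real Set

private lemma psi_hasDerivAt (ζ Pf : ℝ) {x : ℝ} (hx : 0 < 1 + ζ * x) :
    HasDerivAt (fun P => ζ * (P + Pf) - (1 + ζ * P) * Real.log (1 + ζ * P))
      (-(ζ * Real.log (1 + ζ * x))) x := by
  have h1 : HasDerivAt (fun P : ℝ => 1 + ζ * P) ζ x := by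
    simpa using ((hasDerivAt_id x).const_mul ζ).const_add 1
  have hlog : HasDerivAt (fun P => Real.log (1 + ζ * P)) ((1 + ζ * x)⁻¹ * ζ) x := by
    exact (Real.hasDerivAt_log hx.ne').comp x h1
  have h2 : HasDerivAt (fun P : ℝ => ζ * (P + Pf)) ζ x := by
    simpa using ((hasDerivAt_id x).add_const Pf).const_mul ζ
  have h3 := h2.sub (h1.mul hlog)
  refine h3.congr_deriv ?_
  field_simp
  ring

private lemma phi_hasDerivAt (ζ Pf : ℝ) {x : ℝ} (hx : 0 < 1 + ζ * x) (hden : 0 < x + Pf) :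
    HasDerivAt (fun P => Real.log (1 + ζ * P) / (P + Pf))
      ((ζ * (x + Pf) - (1 + ζ * x) * Real.log (1 + ζ * x)) /
        ((1 + ζ * x) * (x + Pf) ^ 2)) x := by
  have h1 : HasDerivAt (fun P : ℝ => 1 + ζ * P) ζ x := by
    simpa using ((hasDerivAt_id x).const_mul ζ).const_add 1
  have hlog : HasDerivAt (fun P => Real.log (1 + ζ * P)) ((1 + ζ * x)⁻¹ * ζ) x := by
    exact (Real.hasDerivAt_log hx.ne').comp x h1
  have hd : HasDerivAt (fun P : ℝ => P + Pf) 1 x := (hasDerivAt_id x).add_const Pf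
  have h3 := hlog.div hd hden.ne'
  refine h3.congr_deriv ?_
  field_simp

/-- Proposition 1: the Pareto optimal set of the SE–EE power-control problem is
`{P_T}` if `P* ≥ P_T`, and the interval `[P*, P_T]` if `P* < P_T`, where a point
`P ∈ [0, P_T]` is Pareto optimal if no `P' ∈ [0, P_T]` strictly improves both
the spectral efficiency `f_SE` and the energy efficiency `f_EE`. -/
theorem pareto_optimal_set
    (ζ Pf χ PT : ℝ) (hζ : 0 < ζ) (hPf : 0 < Pf) (hχ : 0 ≤ χ) (hPT : 0 < PT)
    (Pstar : ℝ) (hPstar : 0 < Pstar)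
    (hroot : ζ * (Pstar + Pf) = (1 + ζ * Pstar) * Real.log (1 + ζ * Pstar))
    (fSE fEE : ℝ → ℝ)
    (hfSE : ∀ P : ℝ, fSE P = Real.logb 2 (1 + ζ * P))
    (hfEE : ∀ P : ℝ, fEE P = fSE P / (P + Pf + χ * fSE P)) :
    (Pstar ≥ PT →
      {P : ℝ | P ∈ Set.Icc 0 PT ∧
          ¬∃ P' ∈ Set.Icc (0 : ℝ) PT, fSE P < fSE P' ∧ fEE P < fEE P'}
        = {PT}) ∧
    (Pstar < PT →
      {P : ℝ | P ∈ Set.Icc 0 PT ∧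
          ¬∃ P' ∈ Set.Icc (0 : ℝ) PT, fSE P < fSE P' ∧ fEE P < fEE P'}
        = Set.Icc Pstar PT) := by
  -- basic positivity facts
  have harg : ∀ x : ℝ, 0 ≤ x → 0 < 1 + ζ * x := fun x hx => by nlinarith
  set ψ : ℝ → ℝ := fun P => ζ * (P + Pf) - (1 + ζ * P) * Real.log (1 + ζ * P) with hψdef
  set φ : ℝ → ℝ := fun P => Real.log (1 + ζ * P) / (P + Pf) with hφdef
  -- ψ is strictly decreasing on [0, ∞)
  have hψanti : StrictAntiOn ψ (Set.Ici 0) := by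
    apply strictAntiOn_of_deriv_neg (convex_Ici 0)
    · intro x hx
      exact (psi_hasDerivAt ζ Pf (harg x hx)).differentiableAt.continuousAt.continuousWithinAt
    · intro x hx
      rw [interior_Ici] at hx
      rw [(psi_hasDerivAt ζ Pf (harg x (le_of_lt hx))).deriv]
      have hx' : (0:ℝ) < x := hx
      have hlogpos : 0 < Real.log (1 + ζ * x) := by
        apply Real.log_pos; nlinarith
      nlinarith
  have hψstar : ψ Pstar = 0 := by simp [hψdef, hroot]
  -- sign of ψ
  have hψpos : ∀ x, 0 ≤ x → x < Pstar → 0 < ψ x := by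
    intro x hx hxs
    have := hψanti (mem_Ici.2 hx) (mem_Ici.2 hPstar.le) hxs
    linarith [hψstar ▸ this]
  have hψneg : ∀ x, Pstar < x → ψ x < 0 := by
    intro x hxs
    have := hψanti (mem_Ici.2 hPstar.le) (mem_Ici.2 (hPstar.le.trans hxs.le)) hxs
    linarith [hψstar ▸ this]
  -- φ strictly increasing on [0, Pstar]
  have hφmono : StrictMonoOn φ (Set.Icc 0 Pstar) := by
    apply strictMonoOn_of_deriv_pos (convex_Icc 0 Pstar)
    · intro x hx
      have hx0 : 0 ≤ x := hx.1
      exact (phi_hasDerivAt ζ Pf (harg x hx0) (by linarith)).differentiableAt.continuousAt.continuousWithinAt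
    · intro x hx
      rw [interior_Icc] at hx
      have hx0 : 0 < x := hx.1
      rw [(phi_hasDerivAt ζ Pf (harg x hx0.le) (by linarith)).deriv]
      apply div_pos (hψpos x hx0.le hx.2)
      have := harg x hx0.le
      positivity
  -- φ strictly decreasing on [Pstar, ∞)
  have hφanti : StrictAntiOn φ (Set.Ici Pstar) := by
    apply strictAntiOn_of_deriv_neg (convex_Ici Pstar)
    · intro x hx
      have hx0 : 0 ≤ x := hPstar.le.trans hx
      exact (phi_hasDerivAt ζ Pf (harg x hx0) (by linarith)).differentiableAt.continuousAt.continuousWithinAt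
    · intro x hx
      rw [interior_Ici] at hx
      have hx0 : 0 ≤ x := hPstar.le.trans hx.le
      rw [(phi_hasDerivAt ζ Pf (harg x hx0) (by linarith)).deriv]
      apply div_neg_of_neg_of_pos (hψneg x hx)
      have := harg x hx0
      positivity
  -- fSE monotonicity
  have hSE_lt : ∀ P1 P2 : ℝ, 0 ≤ P1 → P1 < P2 → fSE P1 < fSE P2 := by
    intro P1 P2 h1 h12
    rw [hfSE, hfSE]
    apply Real.logb_lt_logb one_lt_two (harg P1 h1)
    nlinarith
  have hSE_rev : ∀ P1 P2 : ℝ, 0 ≤ P2 → fSE P1 < fSE P2 → P1 < P2 := by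
    intro P1 P2 h2 hlt
    by_contra h
    push_neg at h
    rcases eq_or_lt_of_le h with rfl | h'
    · exact lt_irrefl _ hlt
    · exact absurd hlt (not_lt.2 (hSE_lt P2 P1 h2 h').le)
  -- fSE nonneg
  have hSE_nonneg : ∀ P : ℝ, 0 ≤ P → 0 ≤ fSE P := by
    intro P hP
    rw [hfSE]
    apply Real.logb_nonneg one_lt_two
    nlinarith
  -- EE comparison iff φ comparison
  have hEE_iff : ∀ P1 P2 : ℝ, 0 ≤ P1 → 0 ≤ P2 → (fEE P1 < fEE P2 ↔ φ P1 < φ P2) := by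
    intro P1 P2 h1 h2
    have hd1 : 0 < P1 + Pf + χ * fSE P1 := by
      have := hSE_nonneg P1 h1; nlinarith
    have hd2 : 0 < P2 + Pf + χ * fSE P2 := by
      have := hSE_nonneg P2 h2; nlinarith
    rw [hfEE, hfEE, div_lt_div_iff₀ hd1 hd2, hφdef]
    simp only
    rw [div_lt_div_iff₀ (by linarith : (0:ℝ) < P1 + Pf) (by linarith : (0:ℝ) < P2 + Pf)]
    have hlog2 : (0:ℝ) < Real.log 2 := Real.log_pos one_lt_two
    have hg1 : fSE P1 = Real.log (1 + ζ * P1) / Real.log 2 := by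
      rw [hfSE, Real.logb]
    have hg2 : fSE P2 = Real.log (1 + ζ * P2) / Real.log 2 := by
      rw [hfSE, Real.logb]
    constructor
    · intro h
      rw [hg1, hg2] at h
      have : Real.log (1 + ζ * P1) * (P2 + Pf) / Real.log 2 <
          Real.log (1 + ζ * P2) * (P1 + Pf) / Real.log 2 := by
        have hexp : ∀ a b c : ℝ, a / Real.log 2 * (b + Pf + χ * (c / Real.log 2)) =
            (a * (b + Pf)) / Real.log 2 + χ * (a * c) / (Real.log 2)^2 := by
          intro a b c; field_simp
        rw [hexp, hexp] at h
        rw [mul_comm (Real.log (1 + ζ * P2)) (Real.log (1 + ζ * P1))] at h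
        linarith
      exact (div_lt_div_iff_of_pos_right hlog2).1 this
    · intro h
      rw [hg1, hg2]
      have hexp : ∀ a b c : ℝ, a / Real.log 2 * (b + Pf + χ * (c / Real.log 2)) =
          (a * (b + Pf)) / Real.log 2 + χ * (a * c) / (Real.log 2)^2 := by
        intro a b c; field_simp
      rw [hexp, hexp, mul_comm (Real.log (1 + ζ * P2)) (Real.log (1 + ζ * P1))]
      have : Real.log (1 + ζ * P1) * (P2 + Pf) / Real.log 2 <
          Real.log (1 + ζ * P2) * (P1 + Pf) / Real.log 2 :=
        (div_lt_div_iff_of_pos_right hlog2).2 h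
      linarith
  -- EE monotone on [0, Pstar], antitone on [Pstar, ∞)
  have hEE_mono : ∀ P1 P2 : ℝ, P1 ∈ Set.Icc 0 Pstar → P2 ∈ Set.Icc 0 Pstar → P1 < P2 →
      fEE P1 < fEE P2 := by
    intro P1 P2 h1 h2 h12
    exact (hEE_iff P1 P2 h1.1 h2.1).2 (hφmono h1 h2 h12)
  have hEE_anti : ∀ P1 P2 : ℝ, Pstar ≤ P1 → P1 < P2 → fEE P2 < fEE P1 := by
    intro P1 P2 h1 h12
    exact (hEE_iff P2 P1 (by linarith [hPstar]) (by linarith [hPstar])).2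
      (hφanti (mem_Ici.2 h1) (mem_Ici.2 (h1.trans h12.le)) h12)
  constructor
  · -- case Pstar ≥ PT
    intro hge
    ext P
    simp only [mem_setOf_eq, mem_singleton_iff]
    constructor
    · rintro ⟨hP, hnd⟩
      by_contra hne
      have hPlt : P < PT := lt_of_le_of_ne hP.2 hne
      exact hnd ⟨PT, ⟨hPT.le, le_refl _⟩, hSE_lt P PT hP.1 hPlt,
        hEE_mono P PT ⟨hP.1, hP.2.trans hge⟩ ⟨hPT.le, hge⟩ hPlt⟩
    · intro he
      rw [he]
      refine ⟨⟨hPT.le, le_refl _⟩, ?_⟩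
      rintro ⟨P', hP', h1, _⟩
      exact absurd (hSE_rev PT P' hP'.1 h1) (not_lt.2 hP'.2)
  · -- case Pstar < PT
    intro hlt
    ext P
    simp only [mem_setOf_eq, Set.mem_Icc]
    constructor
    · rintro ⟨hP, hnd⟩
      refine ⟨?_, hP.2⟩
      by_contra h
      push_neg at h
      exact hnd ⟨Pstar, ⟨hPstar.le, hlt.le⟩, hSE_lt P Pstar hP.1 h,
        hEE_mono P Pstar ⟨hP.1, h.le⟩ ⟨hPstar.le, le_refl _⟩ h⟩
    · rintro ⟨h1, h2⟩
      refine ⟨⟨hPstar.le.trans h1, h2⟩, ?_⟩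
      rintro ⟨P', hP', hse, hee⟩
      have hPP' : P < P' := hSE_rev P P' hP'.1 hse
      exact absurd hee (not_lt.2 (hEE_anti P P' h1 hPP').le)
end

section
/- If χ·ζ ≤ ln 2, then the function g₂(P) = ζ·(P + P_f + (χ/ln 2)·ln(1 + ζP)) / ( (1 + ζP + χζ/ln 2)·ln(1 + ζP) ) is strictly decreasing on (0, ∞). -/
/-- Key polynomial inequality. -/
lemma g2_inner_neg (u L c A : ℝ) (hu : 1 < u) (hL : 0 < L) (hc : 0 < c) (hA : 0 ≤ A)
    (h1 : L ≤ u - 1) (h2 : 1 + L ≤ u) :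
    (u + A) ^ 2 * L - ((u - 1) + c + A * L) * (u * L + u + A) < 0 := by
  have hu0 : (0:ℝ) < u := by linarith
  have hq : (0:ℝ) < 1 - L + L ^ 2 := by nlinarith [sq_nonneg (L - 1/2)]
  have h3 : u * L * (1 - L) ≤ u - 1 := by
    nlinarith [mul_nonneg (by linarith : (0:ℝ) ≤ u - (1 + L)) hq.le,
      pow_pos hL 3]
  have hpos : 0 < u * L + u + A := by nlinarith [mul_pos hu0 hL]
  nlinarith [mul_nonneg hu0.le (by linarith : (0:ℝ) ≤ u - 1 - L),
    mul_nonneg hA (by linarith : (0:ℝ) ≤ (u - 1) - u * L * (1 - L)),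
    mul_pos hc hpos]

lemma g2_hasDerivAt_neg (ζ Pf χ : ℝ) (hζ : 0 < ζ) (hPf : 0 < Pf) (hχ : 0 ≤ χ)
    (x : ℝ) (hx : 0 < x) :
    ∃ d : ℝ, d < 0 ∧ HasDerivAt (fun P : ℝ =>
        ζ * (P + Pf + χ / Real.log 2 * Real.log (1 + ζ * P)) /
          ((1 + ζ * P + χ * ζ / Real.log 2) * Real.log (1 + ζ * P))) d x := by
  have hs : (0:ℝ) < Real.log 2 := Real.log_pos (by norm_num)
  set A : ℝ := χ * ζ / Real.log 2 with hA_def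
  have hA : 0 ≤ A := by positivity
  set u : ℝ := 1 + ζ * x with hu_def
  have hu : 1 < u := by have := mul_pos hζ hx; simp only [hu_def]; linarith
  have hu0 : (0:ℝ) < u := by linarith
  set L : ℝ := Real.log u with hL_def
  have hL : 0 < L := Real.log_pos hu
  -- derivative building blocks
  have h1 : HasDerivAt (fun P : ℝ => 1 + ζ * P) ζ x := by
    simpa using ((hasDerivAt_id x).const_mul ζ).const_add 1
  have hlog : HasDerivAt (fun P : ℝ => Real.log (1 + ζ * P)) (ζ / u) x :=
    h1.log (ne_of_gt hu0)
  have hN : HasDerivAt (fun P : ℝ => ζ * (P + Pf + χ / Real.log 2 * Real.log (1 + ζ * P)))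
      (ζ * (1 + χ / Real.log 2 * (ζ / u))) x := by
    have := (((hasDerivAt_id x).add_const Pf).add (hlog.const_mul (χ / Real.log 2))).const_mul ζ
    simpa using this
  have hD : HasDerivAt (fun P : ℝ => (1 + ζ * P + χ * ζ / Real.log 2) * Real.log (1 + ζ * P))
      (ζ * L + (u + A) * (ζ / u)) x := by
    exact (h1.add_const A).mul hlog
  have hDval : (1 + ζ * x + χ * ζ / Real.log 2) * Real.log (1 + ζ * x) = (u + A) * L := by
    rw [hL_def, hu_def]
  have hDpos : 0 < (u + A) * L := mul_pos (by linarith) hL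
  have hDne : (1 + ζ * x + χ * ζ / Real.log 2) * Real.log (1 + ζ * x) ≠ 0 := by
    rw [hDval]; exact ne_of_gt hDpos
  have hdiv := hN.div hD hDne
  refine ⟨_, ?_, hdiv⟩
  -- show the derivative value is negative
  apply div_neg_of_neg_of_pos
  · -- numerator
    have hNval : ζ * (x + Pf + χ / Real.log 2 * Real.log (1 + ζ * x))
        = ζ * x + ζ * Pf + A * L := by
      rw [hL_def, hu_def, hA_def]; field_simp
    rw [hDval, hNval]
    have hfac : ζ * (1 + χ / Real.log 2 * (ζ / u)) * ((u + A) * L) -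
        (ζ * x + ζ * Pf + A * L) * (ζ * L + (u + A) * (ζ / u))
        = (ζ / u) * ((u + A) ^ 2 * L - ((u - 1) + ζ * Pf + A * L) * (u * L + u + A)) := by
      have hune : u ≠ 0 := ne_of_gt hu0
      have hsne : Real.log 2 ≠ 0 := ne_of_gt hs
      have hu1 : u - 1 = ζ * x := by rw [hu_def]; ring
      rw [hu1, hA_def]
      field_simp
      ring
    rw [hfac]
    apply mul_neg_of_pos_of_neg (by positivity)
    have hexp : 1 + L ≤ u := by
      have := Real.add_one_le_exp L
      rw [hL_def, Real.exp_log hu0] at this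
      linarith
    exact g2_inner_neg u L (ζ * Pf) A hu hL (mul_pos hζ hPf) hA
      (Real.log_le_sub_one_of_pos hu0) hexp
  · rw [hDval]; positivity

/-- Lemma 3: if `χζ ≤ ln 2`, the function
`g₂(P) = ζ·(P + P_f + (χ/ln 2)·ln(1 + ζP)) / ((1 + ζP + χζ/ln 2)·ln(1 + ζP))`
is strictly decreasing on `(0, ∞)`. -/
theorem g2_strictAnti
    (ζ Pf χ : ℝ) (hζ : 0 < ζ) (hPf : 0 < Pf) (hχ : 0 ≤ χ)
    (hmild : χ * ζ ≤ Real.log 2) :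
    StrictAntiOn
      (fun P : ℝ =>
        ζ * (P + Pf + χ / Real.log 2 * Real.log (1 + ζ * P)) /
          ((1 + ζ * P + χ * ζ / Real.log 2) * Real.log (1 + ζ * P)))
      (Set.Ioi 0) := by
  apply strictAntiOn_of_deriv_neg (convex_Ioi 0)
  · intro x hx
    obtain ⟨d, _, hder⟩ := g2_hasDerivAt_neg ζ Pf χ hζ hPf hχ x hx
    exact hder.continuousAt.continuousWithinAt
  · intro x hx
    rw [interior_Ioi] at hx
    obtain ⟨d, hd, hder⟩ := g2_hasDerivAt_neg ζ Pf χ hζ hPf hχ x hx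
    rw [hder.deriv]
    exact hd
end

section
/- For every constant A with 0 ≤ A ≤ 1, the function ρ ↦ ρ / ( (1 + ρ + A)·ln(1 + ρ) ) is strictly decreasing on (0, ∞). -/
/-- Auxiliary inequality: `2(1+x)·log(1+x) < x(2+x)` for `x > 0`. -/
lemma aux_log_ineq {x : ℝ} (hx : 0 < x) :
    2 * (1 + x) * Real.log (1 + x) < x * (2 + x) := by
  set F : ℝ → ℝ := fun y => y * (2 + y) - 2 * (1 + y) * Real.log (1 + y) with hF
  have hmono : StrictMonoOn F (Set.Ici 0) := by
    apply strictMonoOn_of_deriv_pos (convex_Ici 0)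
    · apply ContinuousOn.sub
      · fun_prop
      · apply ContinuousOn.mul (by fun_prop)
        apply ContinuousOn.log (by fun_prop)
        intro y hy
        have : (0:ℝ) ≤ y := hy
        positivity
    · intro y hy
      rw [interior_Ici] at hy
      have hy0 : 0 < y := hy
      have hne : (1 : ℝ) + y ≠ 0 := by positivity
      have h1 : HasDerivAt (fun z : ℝ => z * (2 + z)) (1 * (2 + y) + y * 1) y :=
        (hasDerivAt_id y).mul ((hasDerivAt_id y).const_add 2)
      have h2 : HasDerivAt (fun z : ℝ => Real.log (1 + z)) (1 / (1 + y)) y := by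
        simpa using ((hasDerivAt_id y).const_add 1).log hne
      have h3 : HasDerivAt (fun z : ℝ => 2 * (1 + z) * Real.log (1 + z))
          ((2 * 1) * Real.log (1 + y) + (2 * (1 + y)) * (1 / (1 + y))) y := by
        exact (((hasDerivAt_id y).const_add 1).const_mul 2).mul h2
      have hd : HasDerivAt F
          ((1 * (2 + y) + y * 1) - ((2 * 1) * Real.log (1 + y) + (2 * (1 + y)) * (1 / (1 + y)))) y :=
        h1.sub h3
      rw [hd.deriv]
      have hlog : Real.log (1 + y) < y := by
        have := Real.log_lt_sub_one_of_pos (x := 1 + y) (by positivity) (by linarith)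
        linarith
      have : (2 * (1 + y)) * (1 / (1 + y)) = 2 := by field_simp
      rw [this]
      nlinarith
  have := hmono (Set.self_mem_Ici) (Set.mem_Ici.mpr hx.le) hx
  simp only [hF] at this
  norm_num at this
  linarith

/-- Equation (29) in the proof of Lemma 3: for `A ∈ [0,1]`, the function
`ρ ↦ ρ / ((1 + ρ + A)·ln(1 + ρ))` is strictly decreasing on `(0, ∞)`. -/
theorem first_term_strictAnti
    (A : ℝ) (hA0 : 0 ≤ A) (hA1 : A ≤ 1) :
    StrictAntiOn (fun ρ : ℝ => ρ / ((1 + ρ + A) * Real.log (1 + ρ)))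
      (Set.Ioi 0) := by
  apply strictAntiOn_of_deriv_neg (convex_Ioi 0)
  · apply ContinuousOn.div (by fun_prop)
    · apply ContinuousOn.mul (by fun_prop)
      apply ContinuousOn.log (by fun_prop)
      intro y hy
      have : (0:ℝ) < y := hy
      positivity
    · intro y hy
      have hy0 : (0:ℝ) < y := hy
      have hL : 0 < Real.log (1 + y) := Real.log_pos (by linarith)
      have : 0 < (1 + y + A) * Real.log (1 + y) := by positivity
      exact this.ne'
  · intro x hx
    rw [interior_Ioi] at hx
    have hx0 : 0 < x := hx
    have hne1 : (1 : ℝ) + x ≠ 0 := by positivity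
    have hL : 0 < Real.log (1 + x) := Real.log_pos (by linarith)
    have hDpos : 0 < (1 + x + A) * Real.log (1 + x) := by positivity
    have h1 : HasDerivAt (fun ρ : ℝ => 1 + ρ + A) 1 x := by
      simpa using ((hasDerivAt_id x).const_add 1).add_const A
    have h2 : HasDerivAt (fun ρ : ℝ => Real.log (1 + ρ)) (1 / (1 + x)) x := by
      simpa using ((hasDerivAt_id x).const_add 1).log hne1
    have hd : HasDerivAt (fun ρ : ℝ => (1 + ρ + A) * Real.log (1 + ρ))
        (1 * Real.log (1 + x) + (1 + x + A) * (1 / (1 + x))) x := h1.mul h2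
    have hf : HasDerivAt (fun ρ : ℝ => ρ / ((1 + ρ + A) * Real.log (1 + ρ)))
        ((1 * ((1 + x + A) * Real.log (1 + x)) -
          x * (1 * Real.log (1 + x) + (1 + x + A) * (1 / (1 + x)))) /
          ((1 + x + A) * Real.log (1 + x)) ^ 2) x :=
      (hasDerivAt_id x).div hd hDpos.ne'
    rw [hf.deriv]
    apply div_neg_of_neg_of_pos _ (by positivity)
    -- numerator negative; multiply by (1+x) > 0
    have hxL : Real.log (1 + x) < x := by
      have := Real.log_lt_sub_one_of_pos (x := 1 + x) (by positivity) (by linarith)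
      linarith
    have haux := aux_log_ineq hx0
    have key : (1 + A) * (1 + x) * Real.log (1 + x) < x * (1 + x + A) := by
      rcases eq_or_lt_of_le hA1 with h | h
      · subst h; nlinarith
      · nlinarith [mul_pos (sub_pos.2 h) (mul_pos (by positivity : (0:ℝ) < 1 + x) (sub_pos.2 hxL)),
          mul_nonneg hA0 (sub_pos.2 haux).le]
    have hrw : x * (1 * Real.log (1 + x) + (1 + x + A) * (1 / (1 + x)))
        = x * Real.log (1 + x) + x * (1 + x + A) / (1 + x) := by
      field_simp
    rw [hrw]
    rw [sub_neg]
    have h4 : (1 + A) * Real.log (1 + x) < x * (1 + x + A) / (1 + x) := by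
      rw [lt_div_iff₀ (by positivity : (0:ℝ) < 1 + x)]
      nlinarith [key]
    linarith
end

section
/- Suppose χζ ≤ ln 2, β ∈ (0, 1), P* < P_T, and g₂(P_T) ≤ 1 − β, where P* is the unique root of ζ(P + P_f) = (1 + ζP)·ln(1 + ζP). Then the equation g₂(P) = 1 − β has a unique solution P** in [P*, P_T]; moreover f₂(P) = ln(log₂(1 + ζP)) − (1 − β)·ln(P + P_f + χ·log₂(1 + ζP)) is strictly increasing on (0, P**] and non-increasing on [P**, P_T], so P** maximizes f₂ over (0, P_T]. -/
open Real Set Filter Topology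

/-- Key algebraic inequality: for `u > 1`, `L = log u`, `p > 0`, `k ≥ 0`,
`(u+k)² L < (u-1+p+kL)(uL+u+k)`. -/
private lemma key_ineq {u L p k : ℝ} (hu : 1 < u) (hLdef : L = Real.log u)
    (hp : 0 < p) (hk : 0 ≤ k) :
    (u + k) ^ 2 * L < (u - 1 + p + k * L) * (u * L + u + k) := by
  have hu0 : (0:ℝ) < u := lt_trans one_pos hu
  have hL0 : 0 < L := hLdef ▸ Real.log_pos hu
  have h1 : L ≤ u - 1 := hLdef ▸ Real.log_le_sub_one_of_pos hu0
  have h2 : u - 1 ≤ u * L := by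
    have h3 : 1 - u⁻¹ ≤ L := hLdef ▸ Real.one_sub_inv_le_log_of_pos hu0
    have h4 : u * (1 - u⁻¹) = u - 1 := by field_simp
    nlinarith
  have t1 : 0 < p * (u * L + u + k) := mul_pos hp (by nlinarith)
  have t2 : 0 ≤ (u + k) * (u - 1 - L) := mul_nonneg (by nlinarith) (by linarith)
  have t3 : 0 ≤ k * L * (u * L - u + 1) := by
    apply mul_nonneg (mul_nonneg hk hL0.le); linarith
  nlinarith [t1, t2, t3]

/-- If `h` has negative derivative at each of its positive zeros, then once `h` is
negative at a positive point it stays negative. -/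
private lemma stay_neg (h h' : ℝ → ℝ)
    (hd : ∀ x, 0 < x → HasDerivAt h (h' x) x)
    (hz : ∀ x, 0 < x → h x = 0 → h' x < 0) :
    ∀ x y, 0 < x → x < y → h x < 0 → h y < 0 := by
  intro x y hx hxy hhx
  by_contra hy
  push_neg at hy
  have hcont : ContinuousOn h (Icc x y) := fun t ht =>
    (hd t (lt_of_lt_of_le hx ht.1)).continuousAt.continuousWithinAt
  set S := Icc x y ∩ h ⁻¹' {0} with hSdef
  have hSne : S.Nonempty := by
    obtain ⟨t, ht, ht0⟩ := intermediate_value_Icc hxy.le hcont ⟨hhx.le, hy⟩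
    exact ⟨t, ht, ht0⟩
  have hSc : IsClosed S := hcont.preimage_isClosed_of_isClosed isClosed_Icc isClosed_singleton
  have hSbd : BddBelow S := ⟨x, fun t ht => ht.1.1⟩
  have hwS : sInf S ∈ S := hSc.csInf_mem hSne hSbd
  set w := sInf S with hwdef
  have hw0 : h w = 0 := hwS.2
  have hxw : x < w := by
    rcases eq_or_lt_of_le hwS.1.1 with heq | hlt
    · exact absurd hw0 (heq ▸ hhx.ne)
    · exact hlt
  have hwy : w ≤ y := hwS.1.2
  -- h < 0 on [x, w)
  have hneg : ∀ t, x ≤ t → t < w → h t < 0 := by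
    intro t ht htw
    rcases lt_trichotomy (h t) 0 with hc | hc | hc
    · exact hc
    · exact absurd (csInf_le hSbd ⟨⟨ht, le_trans htw.le hwy⟩, hc⟩) (not_le.2 htw)
    · obtain ⟨s, hs, hs0⟩ := intermediate_value_Icc ht
        (hcont.mono (Icc_subset_Icc le_rfl (le_trans htw.le hwy))) ⟨hhx.le, hc.le⟩
      exact absurd (csInf_le hSbd ⟨⟨hs.1, le_trans hs.2 (le_trans htw.le hwy)⟩, hs0⟩)
        (not_le.2 (lt_of_le_of_lt hs.2 htw))
  -- derivative at w is negative, so h > 0 just left of w : contradiction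
  have hwpos : 0 < w := lt_trans hx hxw
  have hslope : Tendsto (slope h w) (𝓝[≠] w) (𝓝 (h' w)) :=
    hasDerivAt_iff_tendsto_slope.1 (hd w hwpos)
  have hev : ∀ᶠ t in 𝓝[<] w, slope h w t < 0 :=
    (hslope.mono_left (nhdsWithin_mono _ fun t ht => ne_of_lt ht)).eventually_lt_const
      (hz w hwpos hw0)
  have hmem : Ioo x w ∈ 𝓝[<] w := Ioo_mem_nhdsLT_of_mem ⟨hxw, le_rfl⟩
  obtain ⟨t, hts, htm⟩ := (hev.and (eventually_of_mem hmem fun t ht => ht)).exists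
  have htw : t - w < 0 := sub_neg.2 htm.2
  have : 0 < h t := by
    have h5 := hts
    rw [slope_def_field, hw0, sub_zero] at h5
    rcases div_neg_iff.1 h5 with ⟨_, h6⟩ | ⟨h6, _⟩
    · linarith
    · linarith
  exact absurd (hneg t htm.1.le htm.2) (by linarith)

/-- If `h` has negative derivative at each of its positive zeros, then after a
positive zero `h` is strictly negative. -/
private lemma after_zero (h h' : ℝ → ℝ)
    (hd : ∀ x, 0 < x → HasDerivAt h (h' x) x)
    (hz : ∀ x, 0 < x → h x = 0 → h' x < 0) :
    ∀ z y, 0 < z → z < y → h z = 0 → h y < 0 := by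
  intro z y hz0 hzy hhz
  have hslope : Tendsto (slope h z) (𝓝[≠] z) (𝓝 (h' z)) :=
    hasDerivAt_iff_tendsto_slope.1 (hd z hz0)
  have hev : ∀ᶠ t in 𝓝[>] z, slope h z t < 0 :=
    (hslope.mono_left (nhdsWithin_mono _ fun t ht => ne_of_gt ht)).eventually_lt_const
      (hz z hz0 hhz)
  have hmem : Ioo z y ∈ 𝓝[>] z := Ioo_mem_nhdsGT_of_mem ⟨le_rfl, hzy⟩
  obtain ⟨t, hts, htm⟩ := (hev.and (eventually_of_mem hmem fun t ht => ht)).exists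
  have htneg : h t < 0 := by
    have h5 := hts
    rw [slope_def_field, hhz, sub_zero] at h5
    have htz : 0 < t - z := sub_pos.2 htm.1
    rcases div_neg_iff.1 h5 with ⟨_, h6⟩ | ⟨h6, _⟩
    · linarith
    · exact h6
  exact stay_neg h h' hd hz t y (lt_trans hz0 htm.1) htm.2 htneg

set_option maxHeartbeats 1000000

/-- Case 2 of the optimal transmit power characterization (equation (32)):
if `χζ ≤ ln 2`, `β ∈ (0,1)`, `P* < P_T` and `g₂(P_T) ≤ 1 − β`, then
`g₂(P) = 1 − β` has a unique solution `P** ∈ [P*, P_T]`, and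
`f₂` is strictly increasing on `(0, P**]` and non-increasing on `[P**, P_T]`,
so `P**` maximizes `f₂` over `(0, P_T]`. -/
theorem optimal_power_case2
    (ζ Pf χ β PT : ℝ) (hζ : 0 < ζ) (hPf : 0 < Pf) (hχ : 0 ≤ χ)
    (hmild : χ * ζ ≤ Real.log 2) (hβ0 : 0 < β) (hβ1 : β < 1) (hPT : 0 < PT)
    (g₂ f₂ : ℝ → ℝ)
    (hg₂ : ∀ P : ℝ, g₂ P =
      ζ * (P + Pf + χ / Real.log 2 * Real.log (1 + ζ * P)) /
        ((1 + ζ * P + χ * ζ / Real.log 2) * Real.log (1 + ζ * P)))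
    (hf₂ : ∀ P : ℝ, f₂ P =
      Real.log (Real.logb 2 (1 + ζ * P)) -
        (1 - β) * Real.log (P + Pf + χ * Real.logb 2 (1 + ζ * P)))
    (Pstar : ℝ) (hPstar : 0 < Pstar)
    (hroot : ζ * (Pstar + Pf) = (1 + ζ * Pstar) * Real.log (1 + ζ * Pstar))
    (hPstarPT : Pstar < PT) (hgPT : g₂ PT ≤ 1 - β) :
    ∃ Pss : ℝ, Pss ∈ Set.Icc Pstar PT ∧ g₂ Pss = 1 - β ∧
      (∀ Q ∈ Set.Icc Pstar PT, g₂ Q = 1 - β → Q = Pss) ∧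
      StrictMonoOn f₂ (Set.Ioc 0 Pss) ∧
      AntitoneOn f₂ (Set.Icc Pss PT) ∧
      ∀ P ∈ Set.Ioc (0 : ℝ) PT, f₂ P ≤ f₂ Pss := by
  have hl2 : (0:ℝ) < Real.log 2 := Real.log_pos one_lt_two
  set c : ℝ := χ / Real.log 2 with hc
  have hc0 : 0 ≤ c := div_nonneg hχ hl2.le
  set L : ℝ → ℝ := fun P => Real.log (1 + ζ * P) with hLdef
  have hLeq : ∀ P : ℝ, L P = Real.log (1 + ζ * P) := fun _ => rfl
  set h : ℝ → ℝ := fun P =>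
    ζ * (P + Pf) + ζ * c * L P - (1 - β) * ((1 + ζ * P) + c * ζ) * L P with hhdef
  have hheq : ∀ P : ℝ, h P =
      ζ * (P + Pf) + ζ * c * L P - (1 - β) * ((1 + ζ * P) + c * ζ) * L P := fun _ => rfl
  set h' : ℝ → ℝ := fun P =>
    ζ + ζ * c * (ζ / (1 + ζ * P)) -
      (1 - β) * (ζ * L P + ((1 + ζ * P) + c * ζ) * (ζ / (1 + ζ * P))) with hh'def
  have hu1 : ∀ P : ℝ, 0 < P → 1 < 1 + ζ * P := fun P hP => by nlinarith
  have hu0 : ∀ P : ℝ, 0 < P → (0:ℝ) < 1 + ζ * P := fun P hP => by nlinarith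
  have hL0 : ∀ P : ℝ, 0 < P → 0 < L P := fun P hP => Real.log_pos (hu1 P hP)
  -- derivative of the base function
  have dL : ∀ x : ℝ, 0 < x → HasDerivAt L (ζ / (1 + ζ * x)) x := by
    intro x hx
    have d1 : HasDerivAt (fun P : ℝ => 1 + ζ * P) ζ x := by
      simpa using ((hasDerivAt_id x).const_mul ζ).const_add 1
    simpa [hLdef] using d1.log (hu0 x hx).ne'
  -- derivative of h
  have hd : ∀ x : ℝ, 0 < x → HasDerivAt h (h' x) x := by
    intro x hx
    have d1 : HasDerivAt (fun P : ℝ => ζ * (P + Pf)) ζ x := by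
      simpa using ((hasDerivAt_id x).add_const Pf).const_mul ζ
    have d2 : HasDerivAt (fun P : ℝ => ζ * c * L P) (ζ * c * (ζ / (1 + ζ * x))) x :=
      (dL x hx).const_mul (ζ * c)
    have dA : HasDerivAt (fun P : ℝ => (1 + ζ * P) + c * ζ) ζ x := by
      simpa using (((hasDerivAt_id x).const_mul ζ).const_add 1).add_const (c * ζ)
    have d3 : HasDerivAt (fun P : ℝ => (1 - β) * ((1 + ζ * P) + c * ζ) * L P)
        ((1 - β) * ζ * L x + (1 - β) * ((1 + ζ * x) + c * ζ) * (ζ / (1 + ζ * x))) x := by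
      have := (dA.const_mul (1 - β)).mul (dL x hx)
      exact this.congr_deriv (by ring)
    have d4 := (d1.add d2).sub d3
    have hEq : h' x = ζ + ζ * c * (ζ / (1 + ζ * x)) -
        ((1 - β) * ζ * L x + (1 - β) * ((1 + ζ * x) + c * ζ) * (ζ / (1 + ζ * x))) := by
      simp only [hh'def]
      ring
    rw [hEq]
    exact d4
  -- at any positive zero of h, the derivative is negative
  have hz : ∀ x : ℝ, 0 < x → h x = 0 → h' x < 0 := by
    intro x hx h0
    have hux : (0:ℝ) < 1 + ζ * x := hu0 x hx
    have hLx : 0 < L x := hL0 x hx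
    have key := key_ineq (hu1 x hx) (hLeq x) (mul_pos hζ hPf) (mul_nonneg hc0 hζ.le)
    -- key : (1+ζx + cζ)^2 * L x < (ζx + ζPf + cζ L x) * ((1+ζx) L x + (1+ζx) + cζ)
    have hzero : ζ * (x + Pf) + ζ * c * L x = (1 - β) * ((1 + ζ * x) + c * ζ) * L x := by
      linarith [hheq x, h0]
    have hDL : (0:ℝ) < ((1 + ζ * x) + c * ζ) * L x :=
      mul_pos (by nlinarith) hLx
    have hz2 : (ζ * (x + Pf) + ζ * c * L x) * ((1 + ζ * x) * L x + (1 + ζ * x) + c * ζ) =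
        ((1 - β) * ((1 + ζ * x) + c * ζ) * L x) *
          ((1 + ζ * x) * L x + (1 + ζ * x) + c * ζ) := by rw [hzero]
    have h7 : (1 + ζ * x + c * ζ) * ((1 + ζ * x + c * ζ) * L x) <
        ((1 - β) * ((1 + ζ * x) * L x + (1 + ζ * x) + c * ζ)) *
          ((1 + ζ * x + c * ζ) * L x) := by nlinarith [key, hz2]
    have hlt : (1 + ζ * x) + c * ζ <
        (1 - β) * ((1 + ζ * x) * L x + (1 + ζ * x) + c * ζ) :=
      lt_of_mul_lt_mul_right h7 hDL.le
    have hform : h' x = ζ / (1 + ζ * x) *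
        (((1 + ζ * x) + c * ζ) - (1 - β) * ((1 + ζ * x) * L x + (1 + ζ * x) + c * ζ)) := by
      rw [hh'def]
      field_simp
      ring
    rw [hform]
    exact mul_neg_of_pos_of_neg (div_pos hζ hux) (by linarith)
  -- h is positive at Pstar
  have hhPstar : 0 < h Pstar := by
    have hLs : 0 < L Pstar := hL0 Pstar hPstar
    have hus : (0:ℝ) < 1 + ζ * Pstar := hu0 Pstar hPstar
    have hr : ζ * (Pstar + Pf) = (1 + ζ * Pstar) * L Pstar := hroot
    rw [hheq]
    nlinarith [mul_pos (mul_pos hβ0 hus) hLs, mul_nonneg (mul_nonneg hβ0.le (mul_nonneg hc0 hζ.le)) hLs.le]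
  -- h is nonpositive at PT
  have hhPT : h PT ≤ 0 := by
    have hLT : 0 < L PT := hL0 PT hPT
    have hDT : (0:ℝ) < (1 + ζ * PT + χ * ζ / Real.log 2) * L PT := by
      have : 0 ≤ χ * ζ / Real.log 2 := div_nonneg (mul_nonneg hχ hζ.le) hl2.le
      nlinarith [hu0 PT hPT]
    have hgT := hg₂ PT
    rw [hgT] at hgPT
    rw [div_le_iff₀ hDT] at hgPT
    have hc2 : χ * ζ / Real.log 2 = c * ζ := by rw [hc]; ring
    rw [hc2] at hgPT
    rw [hheq, hLeq]
    nlinarith [hgPT]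
  -- existence of the zero Pss
  have hcont : ContinuousOn h (Icc Pstar PT) := fun t ht =>
    (hd t (lt_of_lt_of_le hPstar ht.1)).continuousAt.continuousWithinAt
  obtain ⟨Pss, hPssmem, hPss0⟩ :=
    intermediate_value_Icc' hPstarPT.le hcont ⟨hhPT, hhPstar.le⟩
  have hPsspos : 0 < Pss := lt_of_lt_of_le hPstar hPssmem.1
  -- sign of h on both sides of Pss
  have hafter : ∀ y, Pss < y → h y < 0 := fun y hy =>
    after_zero h h' hd hz Pss y hPsspos hy hPss0
  have hbefore : ∀ x, 0 < x → x < Pss → 0 < h x := by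
    intro x hx hxP
    by_contra hcon
    push_neg at hcon
    rcases hcon.lt_or_eq with hlt | heq
    · exact absurd hPss0 (stay_neg h h' hd hz x Pss hx hxP hlt).ne
    · exact absurd hPss0 (after_zero h h' hd hz x Pss hx hxP heq).ne
  -- bridge between g₂ and h
  have bridge : ∀ P : ℝ, 0 < P → (g₂ P = 1 - β ↔ h P = 0) := by
    intro P hP
    have hLP : 0 < L P := hL0 P hP
    have hDP : (0:ℝ) < (1 + ζ * P + χ * ζ / Real.log 2) * Real.log (1 + ζ * P) := by
      have h1 : 0 ≤ χ * ζ / Real.log 2 := div_nonneg (mul_nonneg hχ hζ.le) hl2.le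
      have := hLeq P
      nlinarith [hu0 P hP, hL0 P hP]
    have hc2 : χ * ζ / Real.log 2 = c * ζ := by rw [hc]; ring
    rw [hg₂ P, div_eq_iff hDP.ne', hheq]
    have hLe : Real.log (1 + ζ * P) = L P := (hLeq P).symm
    rw [hLe, hc2]
    constructor
    · intro hEq; nlinarith [hEq]
    · intro hEq; nlinarith [hEq]
  have hgPss : g₂ Pss = 1 - β := (bridge Pss hPsspos).2 hPss0
  -- uniqueness
  have huniq : ∀ Q ∈ Set.Icc Pstar PT, g₂ Q = 1 - β → Q = Pss := by
    intro Q hQ hgQ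
    have hQ0 : 0 < Q := lt_of_lt_of_le hPstar hQ.1
    have hhQ : h Q = 0 := (bridge Q hQ0).1 hgQ
    rcases lt_trichotomy Q Pss with hlt | heq | hgt
    · exact absurd hhQ (hbefore Q hQ0 hlt).ne'
    · exact heq
    · exact absurd hhQ (hafter Q hgt).ne
  -- derivative of f₂
  have hfd : ∀ x : ℝ, 0 < x → HasDerivAt f₂
      (h x / ((1 + ζ * x) * L x * (x + Pf + c * L x))) x := by
    intro x hx
    have hux : (0:ℝ) < 1 + ζ * x := hu0 x hx
    have hLx : 0 < L x := hL0 x hx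
    have hA : (0:ℝ) < L x / Real.log 2 := div_pos hLx hl2
    have hB : (0:ℝ) < x + Pf + χ * (L x / Real.log 2) := by
      have : 0 ≤ χ * (L x / Real.log 2) := mul_nonneg hχ hA.le
      nlinarith
    have hfeq : f₂ = fun P : ℝ => Real.log (L P / Real.log 2) -
        (1 - β) * Real.log (P + Pf + χ * (L P / Real.log 2)) := by
      funext P
      rw [hf₂ P, Real.logb, hLeq]
    have dA : HasDerivAt (fun P : ℝ => L P / Real.log 2) (ζ / (1 + ζ * x) / Real.log 2) x :=
      (dL x hx).div_const _
    have d1 : HasDerivAt (fun P : ℝ => Real.log (L P / Real.log 2))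
        ((ζ / (1 + ζ * x) / Real.log 2) / (L x / Real.log 2)) x := dA.log hA.ne'
    have dB : HasDerivAt (fun P : ℝ => P + Pf + χ * (L P / Real.log 2))
        (1 + χ * (ζ / (1 + ζ * x) / Real.log 2)) x := by
      exact ((hasDerivAt_id x).add_const Pf).add (dA.const_mul χ)
    have d2 : HasDerivAt (fun P : ℝ => Real.log (P + Pf + χ * (L P / Real.log 2)))
        ((1 + χ * (ζ / (1 + ζ * x) / Real.log 2)) / (x + Pf + χ * (L x / Real.log 2))) x :=
      dB.log hB.ne'
    have d3 := d1.sub (d2.const_mul (1 - β))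
    rw [hfeq]
    refine d3.congr_deriv ?_
    symm
    rw [hheq, hc]
    have hBc : x + Pf + χ / Real.log 2 * L x ≠ 0 := by
      have : χ / Real.log 2 * L x = χ * (L x / Real.log 2) := by ring
      rw [this]; exact hB.ne'
    field_simp
  -- strict monotonicity on (0, Pss]
  have hmono : StrictMonoOn f₂ (Set.Ioc 0 Pss) := by
    apply strictMonoOn_of_deriv_pos (convex_Ioc 0 Pss)
    · exact fun t ht => (hfd t ht.1).continuousAt.continuousWithinAt
    · intro x hx
      rw [interior_Ioc] at hx
      rw [(hfd x hx.1).deriv]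
      apply div_pos (hbefore x hx.1 hx.2)
      have hLx := hL0 x hx.1
      have hux := hu0 x hx.1
      have : (0:ℝ) < x + Pf + c * L x := by nlinarith [mul_nonneg hc0 hLx.le, hx.1]
      positivity
  -- antitone on [Pss, PT]
  have hanti : AntitoneOn f₂ (Set.Icc Pss PT) := by
    apply antitoneOn_of_deriv_nonpos (convex_Icc Pss PT)
    · exact fun t ht => (hfd t (lt_of_lt_of_le hPsspos ht.1)).continuousAt.continuousWithinAt
    · intro x hx
      rw [interior_Icc] at hx
      exact ((hfd x (lt_trans hPsspos hx.1)).differentiableAt).differentiableWithinAt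
    · intro x hx
      rw [interior_Icc] at hx
      have hx0 : 0 < x := lt_trans hPsspos hx.1
      rw [(hfd x hx0).deriv]
      apply le_of_lt
      apply div_neg_of_neg_of_pos (hafter x hx.1)
      have hLx := hL0 x hx0
      have hux := hu0 x hx0
      have : (0:ℝ) < x + Pf + c * L x := by nlinarith [mul_nonneg hc0 hLx.le, hx0]
      positivity
  refine ⟨Pss, hPssmem, hgPss, huniq, hmono, hanti, ?_⟩
  intro P hP
  rcases le_or_gt P Pss with hle | hgt
  · rcases hle.lt_or_eq with hlt | heq
    · exact (hmono ⟨hP.1, hle⟩ ⟨hPsspos, le_rfl⟩ hlt).le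
    · rw [heq]
  · exact hanti ⟨le_rfl, hPssmem.2⟩ ⟨hgt.le, hP.2⟩ hgt.le
end

section
/- Suppose χζ ≤ ln 2, β ∈ [0, 1], P_T > 0, and g₂(P_T) > 1 − β. Then f₂(P) = ln(log₂(1 + ζP)) − (1 − β)·ln(P + P_f + χ·log₂(1 + ζP)) is strictly increasing on (0, P_T], so the maximum of f₂ over (0, P_T] is attained uniquely at P = P_T. -/
/-- Auxiliary: `u (log u - 1)^2 + u^2 - u - 1 ≥ 0` for `u ≥ 1`. -/
private lemma psi_nonneg {u : ℝ} (hu : 1 ≤ u) :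
    0 ≤ u * (Real.log u - 1) ^ 2 + u ^ 2 - u - 1 := by
  have hderiv : ∀ x : ℝ, 0 < x →
      HasDerivAt (fun y : ℝ => y * (Real.log y - 1) ^ 2 + y ^ 2 - y - 1)
        ((Real.log x) ^ 2 + 2 * x - 2) x := by
    intro x hx
    have h1 : HasDerivAt Real.log (1 / x) x := by
      simpa using Real.hasDerivAt_log (ne_of_gt hx)
    have h2 : HasDerivAt (fun y : ℝ => (Real.log y - 1) ^ 2)
        ((2 : ℕ) * (Real.log x - 1) ^ (2 - 1) * (1 / x)) x := (h1.sub_const 1).pow 2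
    have h3 : HasDerivAt (fun y : ℝ => y * (Real.log y - 1) ^ 2)
        (1 * (Real.log x - 1) ^ 2 + x * ((2 : ℕ) * (Real.log x - 1) ^ (2 - 1) * (1 / x))) x :=
      (hasDerivAt_id x).mul h2
    have h4 := ((h3.add (hasDerivAt_pow 2 x)).sub (hasDerivAt_id x)).sub_const 1
    refine h4.congr_deriv ?_
    field_simp
    ring
  have hmono : MonotoneOn (fun y : ℝ => y * (Real.log y - 1) ^ 2 + y ^ 2 - y - 1)
      (Set.Ici 1) := by
    apply monotoneOn_of_deriv_nonneg (convex_Ici 1)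
    · intro x hx
      exact (hderiv x (lt_of_lt_of_le one_pos hx)).continuousAt.continuousWithinAt
    · rw [interior_Ici]
      intro x hx
      exact (hderiv x (lt_trans one_pos hx)).differentiableAt.differentiableWithinAt
    · rw [interior_Ici]
      intro x hx
      rw [(hderiv x (lt_trans one_pos hx)).deriv]
      have hx1 : (1 : ℝ) < x := hx
      nlinarith [sq_nonneg (Real.log x)]
  have h0 := hmono (Set.self_mem_Ici) hu hu
  simpa using h0

/-- Auxiliary purely algebraic inequality. -/
private lemma key_ineq_s13 {u c A q : ℝ} (hu : 1 ≤ u) (hc0 : 0 ≤ c) (hc1 : c ≤ 1)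
    (hA0 : 0 ≤ A) (hAu : A ≤ u - 1)
    (hψ : 0 ≤ u * (A - 1) ^ 2 + u ^ 2 - u - 1) (hq : 0 ≤ q) :
    (u + c) ^ 2 * A ≤ ((u - 1) + q + c * A) * (u * A + u + c) := by
  have t1 : 0 ≤ (1 - c) * (u * (u - 1 - A)) :=
    mul_nonneg (by linarith) (mul_nonneg (by linarith) (by linarith))
  have t2 : 0 ≤ c * (u * (A - 1) ^ 2 + u ^ 2 - u - 1) := mul_nonneg hc0 hψ
  have t3 : 0 ≤ q * (u * A + u + c) := by
    have h1 : 0 ≤ u * A := mul_nonneg (by linarith) hA0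
    exact mul_nonneg hq (by linarith)
  nlinarith [t1, t2, t3]

/-- Case 1 of the optimal transmit power characterization (equation (32)):
if `χζ ≤ ln 2`, `β ∈ [0,1]`, and `g₂(P_T) > 1 − β`, then `f₂` is strictly
increasing on `(0, P_T]`, so its maximum over `(0, P_T]` is attained uniquely
at `P = P_T`. -/
theorem optimal_power_case1
    (ζ Pf χ β PT : ℝ) (hζ : 0 < ζ) (hPf : 0 < Pf) (hχ : 0 ≤ χ)
    (hmild : χ * ζ ≤ Real.log 2) (hβ0 : 0 ≤ β) (hβ1 : β ≤ 1) (hPT : 0 < PT)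
    (g₂ f₂ : ℝ → ℝ)
    (hg₂ : ∀ P : ℝ, g₂ P =
      ζ * (P + Pf + χ / Real.log 2 * Real.log (1 + ζ * P)) /
        ((1 + ζ * P + χ * ζ / Real.log 2) * Real.log (1 + ζ * P)))
    (hf₂ : ∀ P : ℝ, f₂ P =
      Real.log (Real.logb 2 (1 + ζ * P)) -
        (1 - β) * Real.log (P + Pf + χ * Real.logb 2 (1 + ζ * P)))
    (hgPT : 1 - β < g₂ PT) :
    StrictMonoOn f₂ (Set.Ioc 0 PT) ∧
      ∀ P ∈ Set.Ioc (0 : ℝ) PT, P ≠ PT → f₂ P < f₂ PT := by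
  have hl2 : (0 : ℝ) < Real.log 2 := Real.log_pos one_lt_two
  have hc0 : 0 ≤ χ * ζ / Real.log 2 := by positivity
  have hc1 : χ * ζ / Real.log 2 ≤ 1 := (div_le_one hl2).2 hmild
  have hu1 : ∀ P : ℝ, 0 < P → 1 < 1 + ζ * P := by
    intro P hP; nlinarith
  have hupos : ∀ P : ℝ, 0 < P → 0 < 1 + ζ * P := by
    intro P hP; linarith [hu1 P hP]
  have hA : ∀ P : ℝ, 0 < P → 0 < Real.log (1 + ζ * P) :=
    fun P hP => Real.log_pos (hu1 P hP)
  have hAderiv : ∀ P : ℝ, 0 < P →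
      HasDerivAt (fun x => Real.log (1 + ζ * x)) (ζ / (1 + ζ * P)) P := by
    intro P hP
    have h1 : HasDerivAt (fun x : ℝ => 1 + ζ * x) ζ P := by
      simpa using ((hasDerivAt_id P).const_mul ζ).const_add 1
    exact h1.log (ne_of_gt (hupos P hP))
  have hNpos : ∀ P : ℝ, 0 < P →
      0 < P + Pf + χ / Real.log 2 * Real.log (1 + ζ * P) := by
    intro P hP
    have := hA P hP
    have : 0 ≤ χ / Real.log 2 * Real.log (1 + ζ * P) :=
      mul_nonneg (by positivity) (le_of_lt this)
    linarith
  have hDpos : ∀ P : ℝ, 0 < P →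
      0 < (1 + ζ * P + χ * ζ / Real.log 2) * Real.log (1 + ζ * P) := by
    intro P hP
    have h1 : 0 < 1 + ζ * P + χ * ζ / Real.log 2 := by
      have := hupos P hP; linarith [hc0]
    exact mul_pos h1 (hA P hP)
  have hg₂' : g₂ = fun P => ζ * (P + Pf + χ / Real.log 2 * Real.log (1 + ζ * P)) /
      ((1 + ζ * P + χ * ζ / Real.log 2) * Real.log (1 + ζ * P)) := funext hg₂
  -- derivative of g₂
  have hg₂deriv : ∀ P : ℝ, 0 < P → HasDerivAt g₂
      ((ζ * (1 + χ / Real.log 2 * (ζ / (1 + ζ * P))) *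
          ((1 + ζ * P + χ * ζ / Real.log 2) * Real.log (1 + ζ * P)) -
        ζ * (P + Pf + χ / Real.log 2 * Real.log (1 + ζ * P)) *
          (ζ * Real.log (1 + ζ * P) + (1 + ζ * P + χ * ζ / Real.log 2) * (ζ / (1 + ζ * P)))) /
        ((1 + ζ * P + χ * ζ / Real.log 2) * Real.log (1 + ζ * P)) ^ 2) P := by
    intro P hP
    rw [hg₂']
    have hN : HasDerivAt (fun x : ℝ => x + Pf + χ / Real.log 2 * Real.log (1 + ζ * x))
        (1 + χ / Real.log 2 * (ζ / (1 + ζ * P))) P :=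
      ((hasDerivAt_id P).add_const Pf).add ((hAderiv P hP).const_mul (χ / Real.log 2))
    have h1 : HasDerivAt (fun x : ℝ => 1 + ζ * x) ζ P := by
      simpa using ((hasDerivAt_id P).const_mul ζ).const_add 1
    have hD : HasDerivAt (fun x : ℝ => (1 + ζ * x + χ * ζ / Real.log 2) * Real.log (1 + ζ * x))
        (ζ * Real.log (1 + ζ * P) + (1 + ζ * P + χ * ζ / Real.log 2) * (ζ / (1 + ζ * P))) P :=
      (h1.add_const (χ * ζ / Real.log 2)).mul (hAderiv P hP)
    exact (hN.const_mul ζ).div hD (ne_of_gt (hDpos P hP))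
  -- the derivative of g₂ is nonpositive
  have hg₂nonpos : ∀ P : ℝ, 0 < P → deriv g₂ P ≤ 0 := by
    intro P hP
    rw [(hg₂deriv P hP).deriv]
    apply div_nonpos_of_nonpos_of_nonneg _ (by positivity)
    have hAu : Real.log (1 + ζ * P) ≤ (1 + ζ * P) - 1 :=
      Real.log_le_sub_one_of_pos (hupos P hP)
    have key := key_ineq_s13 (le_of_lt (hu1 P hP)) hc0 hc1 (le_of_lt (hA P hP)) hAu
      (psi_nonneg (le_of_lt (hu1 P hP))) (q := ζ * Pf) (by positivity)
    have heq : ζ * (1 + χ / Real.log 2 * (ζ / (1 + ζ * P))) *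
          ((1 + ζ * P + χ * ζ / Real.log 2) * Real.log (1 + ζ * P)) -
        ζ * (P + Pf + χ / Real.log 2 * Real.log (1 + ζ * P)) *
          (ζ * Real.log (1 + ζ * P) + (1 + ζ * P + χ * ζ / Real.log 2) * (ζ / (1 + ζ * P))) =
        ζ * (((1 + ζ * P) + χ * ζ / Real.log 2) ^ 2 * Real.log (1 + ζ * P) -
          (((1 + ζ * P) - 1) + ζ * Pf + χ * ζ / Real.log 2 * Real.log (1 + ζ * P)) *
            ((1 + ζ * P) * Real.log (1 + ζ * P) + (1 + ζ * P) + χ * ζ / Real.log 2)) /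
          (1 + ζ * P) := by
      field_simp
      ring
    rw [heq]
    apply div_nonpos_of_nonpos_of_nonneg _ (le_of_lt (hupos P hP))
    apply mul_nonpos_of_nonneg_of_nonpos (le_of_lt hζ)
    linarith [key]
  -- g₂ is antitone on (0, ∞)
  have hanti : AntitoneOn g₂ (Set.Ioi 0) := by
    apply antitoneOn_of_deriv_nonpos (convex_Ioi 0)
    · intro P hP
      exact (hg₂deriv P hP).continuousAt.continuousWithinAt
    · rw [interior_Ioi]
      intro P hP
      exact (hg₂deriv P hP).differentiableAt.differentiableWithinAt
    · rw [interior_Ioi]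
      intro P hP
      exact hg₂nonpos P hP
  -- the crucial strict inequality for all 0 < Q ≤ PT
  have hstrict : ∀ Q : ℝ, 0 < Q → Q ≤ PT →
      (1 - β) * ((1 + ζ * Q + χ * ζ / Real.log 2) * Real.log (1 + ζ * Q)) <
        ζ * (Q + Pf + χ / Real.log 2 * Real.log (1 + ζ * Q)) := by
    intro Q hQ hQT
    have h1 : g₂ PT ≤ g₂ Q := hanti (Set.mem_Ioi.2 hQ) (Set.mem_Ioi.2 hPT) hQT
    have h2 : 1 - β < g₂ Q := lt_of_lt_of_le hgPT h1
    rw [hg₂ Q] at h2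
    exact (lt_div_iff₀ (hDpos Q hQ)).1 h2
  -- rewrite f₂ explicitly
  have hf₂' : f₂ = fun P => Real.log (Real.log (1 + ζ * P) / Real.log 2) -
      (1 - β) * Real.log (P + Pf + χ * (Real.log (1 + ζ * P) / Real.log 2)) := by
    funext P
    rw [hf₂ P]
    simp [Real.logb]
  have hN2pos : ∀ P : ℝ, 0 < P →
      0 < P + Pf + χ * (Real.log (1 + ζ * P) / Real.log 2) := by
    intro P hP
    have h1 : 0 ≤ χ * (Real.log (1 + ζ * P) / Real.log 2) :=
      mul_nonneg hχ (le_of_lt (div_pos (hA P hP) hl2))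
    linarith
  -- derivative of f₂
  have hf₂deriv : ∀ P : ℝ, 0 < P → HasDerivAt f₂
      ((ζ / (1 + ζ * P) / Real.log 2) / (Real.log (1 + ζ * P) / Real.log 2) -
        (1 - β) * ((1 + χ * (ζ / (1 + ζ * P) / Real.log 2)) /
          (P + Pf + χ * (Real.log (1 + ζ * P) / Real.log 2)))) P := by
    intro P hP
    rw [hf₂']
    have h1 : HasDerivAt (fun x : ℝ => Real.log (1 + ζ * x) / Real.log 2)
        (ζ / (1 + ζ * P) / Real.log 2) P := (hAderiv P hP).div_const _
    have h2 : HasDerivAt (fun x : ℝ => Real.log (Real.log (1 + ζ * x) / Real.log 2))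
        ((ζ / (1 + ζ * P) / Real.log 2) / (Real.log (1 + ζ * P) / Real.log 2)) P :=
      h1.log (ne_of_gt (div_pos (hA P hP) hl2))
    have h3 : HasDerivAt (fun x : ℝ => x + Pf + χ * (Real.log (1 + ζ * x) / Real.log 2))
        (1 + χ * (ζ / (1 + ζ * P) / Real.log 2)) P :=
      ((hasDerivAt_id P).add_const Pf).add (h1.const_mul χ)
    have h4 : HasDerivAt
        (fun x : ℝ => Real.log (x + Pf + χ * (Real.log (1 + ζ * x) / Real.log 2)))
        ((1 + χ * (ζ / (1 + ζ * P) / Real.log 2)) /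
          (P + Pf + χ * (Real.log (1 + ζ * P) / Real.log 2))) P :=
      h3.log (ne_of_gt (hN2pos P hP))
    exact h2.sub (h4.const_mul (1 - β))
  -- strict monotonicity
  have hmono : StrictMonoOn f₂ (Set.Ioc 0 PT) := by
    apply strictMonoOn_of_deriv_pos (convex_Ioc 0 PT)
    · intro P hP
      exact (hf₂deriv P hP.1).continuousAt.continuousWithinAt
    · intro P hP
      rw [interior_Ioc] at hP
      rw [(hf₂deriv P hP.1).deriv]
      have hP0 := hP.1
      have hu := hupos P hP0
      have hA0 := hA P hP0
      have hN2 := hN2pos P hP0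
      have heq : (ζ / (1 + ζ * P) / Real.log 2) / (Real.log (1 + ζ * P) / Real.log 2) -
          (1 - β) * ((1 + χ * (ζ / (1 + ζ * P) / Real.log 2)) /
            (P + Pf + χ * (Real.log (1 + ζ * P) / Real.log 2))) =
          (ζ * (P + Pf + χ / Real.log 2 * Real.log (1 + ζ * P)) -
            (1 - β) * ((1 + ζ * P + χ * ζ / Real.log 2) * Real.log (1 + ζ * P))) /
          ((1 + ζ * P) * Real.log (1 + ζ * P) *
            (P + Pf + χ * (Real.log (1 + ζ * P) / Real.log 2))) := by
        field_simp
      rw [heq]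
      apply div_pos
      · linarith [hstrict P hP0 (le_of_lt hP.2)]
      · exact mul_pos (mul_pos hu hA0) hN2
  refine ⟨hmono, ?_⟩
  intro P hP hne
  exact hmono hP (Set.right_mem_Ioc.2 hPT) (lt_of_le_of_ne hP.2 hne)
end
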